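/- Let k be a field, G a group, and H a normal subgroup of G. Let 0 → A → E →π→ k → 0 be a short exact sequence in Rep k G, where k carries the trivial G-action. Then the sequence splits after restriction to H (i.e. π admits an H-equivariant k-linear section) if and only if the extension originates from the H-trivial representations: there exist representations A′ and E′ of G on which every element of H acts as the identity, a short exact sequence 0 → A′ → E′ →π′→ k → 0 in Rep k G, and G-equivariant morphisms A′ → A and E′ → E such that the resulting diagram (with the identity map on k on the right) commutes. -/

import Mathlib

/-!
STATEMENT 1: Let `H` be a normal subgroup of `G` and
`0 → A → E →π→ k → 0` a short exact sequence in `Rep k G` (with `k` the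
trivial representation). The sequence splits after restriction to `H`
(i.e. `π` admits an `H`-equivariant `k`-linear section) if and only if
it originates from the subcategory of `H`-trivial representations:
there are `G`-representations `A'`, `E'` on which every element of `H`
acts as the identity, a short exact sequence `0 → A' → E' →π'→ k → 0`
in `Rep k G`, and `G`-equivariant maps `A' → A`, `E' → E` making the
diagram (with the identity on `k`) commute.
-/

open CategoryTheory CategoryTheory.Limits

universe u

section Aux

variable {k G : Type u} [Field k] [Group G]

/-- The subrepresentation on an invariant submodule. -/
noncomputable def repOfSubmodule (E : Rep k G) (W : Submodule k E)
    (hW : ∀ g : G, ∀ x ∈ W, E.ρ g x ∈ W) : Rep k G :=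
  Rep.of (G := G)
    { toFun := fun g => (E.ρ g).restrict (fun x hx => hW g x hx)
      map_one' := by
        ext x
        simp [LinearMap.restrict_apply]
      map_mul' := fun g g' => by
        ext x
        simp [LinearMap.restrict_apply] }

lemma repOfSubmodule_ρ_apply (E : Rep k G) (W : Submodule k E)
    (hW : ∀ g : G, ∀ x ∈ W, E.ρ g x ∈ W) (g : G) (x : W) :
    (repOfSubmodule E W hW).ρ g x = (⟨E.ρ g x.1, hW g x.1 x.2⟩ : W) := rfl

end Aux

theorem splits_on_H_iff_originates_from_H_trivial
    {k G : Type u} [Field k] [Group G] (H : Subgroup G) [H.Normal]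
    {A E : Rep k G} (ι : A ⟶ E) (π : E ⟶ Rep.trivial k G k)
    (w : ι ≫ π = 0)
    (hse : (ShortComplex.mk ι π w).ShortExact) :
    (∃ s : k →ₗ[k] E, (∀ x : k, π.hom (s x) = x) ∧
        ∀ h ∈ H, ∀ x : k, E.ρ h (s x) = s x) ↔
      ∃ (A' E' : Rep k G) (ι' : A' ⟶ E') (π' : E' ⟶ Rep.trivial k G k)
        (w' : ι' ≫ π' = 0),
        (ShortComplex.mk ι' π' w').ShortExact ∧
        (∀ h ∈ H, ∀ x : A', A'.ρ h x = x) ∧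
        (∀ h ∈ H, ∀ x : E', E'.ρ h x = x) ∧
        ∃ (f : A' ⟶ A) (g : E' ⟶ E), f ≫ ι = ι' ≫ g ∧ g ≫ π = π' := by
  constructor
  · rintro ⟨s, hs, hH⟩
    set e : E := s 1 with he
    set W : Submodule k E := Submodule.span k (Set.range fun g : G => E.ρ g e) with hWdef
    have hWinv : ∀ g : G, ∀ x ∈ W, E.ρ g x ∈ W := by
      intro g x hx
      induction hx using Submodule.span_induction with
      | mem x hx =>
        obtain ⟨g', rfl⟩ := hx
        refine Submodule.subset_span ⟨g * g', ?_⟩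
        simp [map_mul]
      | zero => simp
      | add x y _ _ hx hy => simpa using add_mem hx hy
      | smul c x _ hx => simpa using Submodule.smul_mem _ c hx
    have hHW : ∀ h ∈ H, ∀ x ∈ W, E.ρ h x = x := by
      intro h hh x hx
      induction hx using Submodule.span_induction with
      | mem x hx =>
        obtain ⟨g, rfl⟩ := hx
        have h1 : g⁻¹ * h * g ∈ H := Subgroup.Normal.conj_mem' ‹H.Normal› h hh g
        have h2 : E.ρ (g⁻¹ * h * g) e = e := hH _ h1 1
        calc E.ρ h (E.ρ g e) = E.ρ (g * (g⁻¹ * h * g)) e := by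
              rw [show g * (g⁻¹ * h * g) = h * g by group, map_mul]; rfl
          _ = E.ρ g e := by rw [map_mul]; simp only [Module.End.mul_apply, h2]
      | zero => simp
      | add x y _ _ hx hy => rw [map_add, hx, hy]
      | smul c x _ hx => rw [map_smul, hx]
    have heW : e ∈ W := Submodule.subset_span ⟨1, by simp⟩
    set A'' : Submodule k E := W ⊓ LinearMap.ker π.hom.toLinearMap with hA''def
    have hAinv : ∀ g : G, ∀ x ∈ A'', E.ρ g x ∈ A'' := by
      rintro g x ⟨hxW, hxK⟩
      refine ⟨hWinv g x hxW, ?_⟩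
      have h3 := Rep.hom_comm_apply π g x
      have hxK' : π.hom x = 0 := hxK
      show π.hom (E.ρ g x) = 0
      rw [h3, hxK']
      exact map_zero _
    let Aext : Rep k G := repOfSubmodule E A'' hAinv
    let Eext : Rep k G := repOfSubmodule E W hWinv
    let ι' : Aext ⟶ Eext :=
      ConcreteCategory.ofHom (C := Rep k G) (X := Aext) (Y := Eext)
        ⟨Submodule.inclusion inf_le_left, fun g => rfl⟩
    let π' : Eext ⟶ Rep.trivial k G k :=
      ConcreteCategory.ofHom (C := Rep k G) (X := Eext) (Y := Rep.trivial k G k)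
      ⟨π.hom.toLinearMap.comp W.subtype, by
        intro g
        refine LinearMap.ext fun x => ?_
        show π.hom (E.ρ g x.1) = _
        rw [Rep.hom_comm_apply π g x.1]
        rfl⟩
    have w' : ι' ≫ π' = 0 := by
      ext x
      exact x.2.2
    have key : ∀ y : k, s y = y • e := fun y => by
      rw [he, ← map_smul, smul_eq_mul, mul_one]
    have hmono : Mono ι' := by
      have : Mono ((forget₂ (Rep k G) (ModuleCat k)).map ι') := by
        rw [ModuleCat.mono_iff_injective]
        intro a b hab
        exact Submodule.inclusion_injective (inf_le_left : A'' ≤ W) hab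
      exact (forget₂ (Rep k G) (ModuleCat k)).mono_of_mono_map this
    have hepi : Epi π' := by
      have hsurj : Function.Surjective π'.hom := by
        intro x
        exact ⟨⟨s x, by rw [key x]; exact W.smul_mem _ heW⟩, hs x⟩
      have : Epi ((forget₂ (Rep k G) (ModuleCat k)).map π') :=
        (ModuleCat.epi_iff_surjective _).2 hsurj
      exact (forget₂ (Rep k G) (ModuleCat k)).epi_of_epi_map this
    have hex : (ShortComplex.mk ι' π' w').Exact := by
      rw [← ShortComplex.exact_map_iff_of_faithful _ (forget₂ (Rep k G) (ModuleCat k))]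
      rw [ShortComplex.moduleCat_exact_iff]
      intro x hx
      exact ⟨⟨x.1, x.2, hx⟩, rfl⟩
    let gmor : Eext ⟶ E :=
      ConcreteCategory.ofHom (C := Rep k G) (X := Eext) (Y := E) ⟨W.subtype, fun g => rfl⟩
    have h0 : (ι' ≫ gmor) ≫ π = 0 := by
      ext x
      exact x.2.2
    obtain ⟨f, hf⟩ := KernelFork.IsLimit.lift' hse.fIsKernel (ι' ≫ gmor) h0
    refine ⟨Aext, Eext, ι', π', w', { exact := hex }, ?_, ?_, f, gmor, hf, rfl⟩
    · intro h hh x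
      exact Subtype.ext (hHW h hh x.1 x.2.1)
    · intro h hh x
      exact Subtype.ext (hHW h hh x.1 x.2)
  · rintro ⟨A', E', ι', π', w', hse', hA', hE', f, g, hcomm, hg⟩
    have : Epi π' := hse'.epi_g
    have hsurj : Function.Surjective π'.hom := by
      have : Epi ((forget₂ (Rep k G) (ModuleCat k)).map π') := inferInstance
      exact (ModuleCat.epi_iff_surjective _).1 this
    obtain ⟨e', he'⟩ := hsurj (1 : k)
    have h1 : π.hom (g.hom e') = (1 : k) := by
      have h2 : (g ≫ π).hom e' = π'.hom e' := by rw [hg]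
      exact h2.trans he'
    refine ⟨LinearMap.toSpanSingleton k E (g.hom e'), ?_, ?_⟩
    · intro x
      rw [LinearMap.toSpanSingleton_apply, map_smul, h1]
      show x • (1 : k) = x
      simp
    · intro h hh x
      simp only [LinearMap.toSpanSingleton_apply, map_smul]
      rw [← Rep.hom_comm_apply g h e', hE' h hh e']
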